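/- Let R be an elementary divisor domain, g(t) ∈ R[t] monic, f(t) ∈ R[t], and let z(t) be the monic greatest common divisor of f(t) and g(t), with f(t) = z(t)F(t) and g(t) = z(t)G(t). Then the last nonzero determinantal divisor of f(C_g) equals (up to units of R) the resultant Res(F, G) = ∏_{θ: G(θ)=0} F(θ). -/

import Mathlib

open Polynomial Matrix

def companion {R : Type*} [CommRing R] (g : R[X]) :
    Matrix (Fin g.natDegree) (Fin g.natDegree) R :=
  Matrix.of fun i j =>
    if (i : ℕ) = 0 then -g.coeff (g.natDegree - 1 - (j : ℕ))
    else if (i : ℕ) = (j : ℕ) + 1 then 1 else 0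

def IsEDD (R : Type*) [CommRing R] : Prop :=
  ∀ a b c : R, ∃ d x y z w : R,
    (d ∣ a ∧ d ∣ b ∧ d ∣ c ∧ ∀ e : R, e ∣ a → e ∣ b → e ∣ c → e ∣ d) ∧
    d = z * x * a + z * y * b + w * y * c

namespace Stmt6Aux

open Finset

variable {R : Type*} [CommRing R]

/-- The `j`-th Horner basis polynomial of `q` : the quotient `⌊q / X^(n-j)⌋`. -/
noncomputable def hb (q : R[X]) (j : ℕ) : R[X] :=
  ∑ i ∈ Finset.range (j + 1), C (q.coeff (q.natDegree - j + i)) * X ^ i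

/-- The `i`-th coordinate functional w.r.t. the Horner basis of `q`. -/
noncomputable def cf (q : R[X]) (i : ℕ) : R[X] →ₗ[R] R :=
  (lcoeff R (q.natDegree - 1)) ∘ₗ (modByMonicHom q) ∘ₗ
    (LinearMap.mulLeft R (X ^ (q.natDegree - 1 - i)))

theorem cf_apply (q : R[X]) (i : ℕ) (s : R[X]) :
    cf q i s = ((X ^ (q.natDegree - 1 - i) * s) %ₘ q).coeff (q.natDegree - 1) := rfl

theorem natDegree_hb_le (q : R[X]) (j : ℕ) : (hb q j).natDegree ≤ j := by
  apply natDegree_sum_le_of_forall_le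
  intro i hi
  exact le_trans (natDegree_C_mul_X_pow_le _ _) (by simpa using Nat.lt_succ_iff.mp (mem_range.mp hi))

theorem coeff_hb (q : R[X]) {i j : ℕ} (h : i ≤ j) :
    (hb q j).coeff i = q.coeff (q.natDegree - j + i) := by
  rw [hb, finset_sum_coeff]
  simp only [C_mul_X_pow_eq_monomial, coeff_monomial]
  rw [Finset.sum_ite_eq' (Finset.range (j + 1)) i]
  simp [Nat.lt_succ_iff.mpr h]

theorem coeff_hb_self (q : R[X]) {j : ℕ} (h : j ≤ q.natDegree) :
    (hb q j).coeff j = q.coeff q.natDegree := by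
  rw [coeff_hb q le_rfl]
  congr 1
  omega

theorem hb_zero (hq : q.Monic) : hb (q : R[X]) 0 = 1 := by
  simp [hb, hq.coeff_natDegree]

/-- `X^(n-i) * hb q i = q - (q mod X^(n-i))`. -/
theorem pow_mul_hb (q : R[X]) {i : ℕ} (h : i ≤ q.natDegree) :
    X ^ (q.natDegree - i) * hb q i
      = q - ∑ k ∈ Finset.range (q.natDegree - i), C (q.coeff k) * X ^ k := by
  set n := q.natDegree with hn
  have h1 : X ^ (n - i) * hb q i
      = ∑ l ∈ Finset.range (i + 1), C (q.coeff (n - i + l)) * X ^ (n - i + l) := by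
    rw [hb, Finset.mul_sum]
    refine Finset.sum_congr rfl fun l _ => ?_
    rw [pow_add]; ring
  have h2 : q = ∑ k ∈ Finset.range (n + 1), C (q.coeff k) * X ^ k := by
    conv_lhs => rw [q.as_sum_range' (n + 1) (by omega)]
    exact Finset.sum_congr rfl fun k _ => (C_mul_X_pow_eq_monomial).symm
  have h3 : ∑ l ∈ Finset.range (i + 1), C (q.coeff (n - i + l)) * X ^ (n - i + l)
      = ∑ k ∈ Finset.Ico (n - i) (n + 1), C (q.coeff k) * X ^ k := by
    rw [Finset.sum_Ico_eq_sum_range]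
    apply Finset.sum_congr (congrArg _ (by omega)) fun l _ => rfl
  have h4 : ∑ k ∈ Finset.range (n - i), C (q.coeff k) * X ^ k
      + ∑ k ∈ Finset.Ico (n - i) (n + 1), C (q.coeff k) * X ^ k = q := by
    rw [Finset.range_eq_Ico, Finset.sum_Ico_consecutive _ (Nat.zero_le _) (by omega),
      ← Finset.range_eq_Ico, ← h2]
  rw [h1, h3, eq_sub_iff_add_eq, add_comm]
  exact h4

theorem cf_eq_of_dvd_sub {q : R[X]} (hq : q.Monic) {s s' : R[X]} (i : ℕ)
    (h : q ∣ s - s') : cf q i s = cf q i s' := by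
  have h2 : cf q i s - cf q i s' = cf q i (s - s') := (map_sub _ _ _).symm
  have h3 : cf q i (s - s') = 0 := by
    rw [cf_apply]
    rw [(modByMonic_eq_zero_iff_dvd hq).2 (h.mul_left _)]
    simp
  rw [h3] at h2
  exact sub_eq_zero.mp h2

theorem modByMonic_self_of_natDegree_lt [Nontrivial R] {q p : R[X]} (hq : q.Monic)
    (h : p.natDegree < q.natDegree) : p %ₘ q = p := by
  rw [modByMonic_eq_self_iff hq]
  calc degree p ≤ (p.natDegree : WithBot ℕ) := degree_le_natDegree
    _ < (q.natDegree : WithBot ℕ) := by exact_mod_cast h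
    _ = degree q := (degree_eq_natDegree hq.ne_zero).symm

theorem cf_of_natDegree_le [Nontrivial R] {q : R[X]} (hq : q.Monic) {i : ℕ}
    (hi : i < q.natDegree) {s : R[X]} (hs : s.natDegree ≤ i) :
    cf q i s = s.coeff i := by
  rw [cf_apply]
  have hdeg : (X ^ (q.natDegree - 1 - i) * s).natDegree < q.natDegree := by
    refine lt_of_le_of_lt natDegree_mul_le ?_
    have := natDegree_X_pow_le (R := R) (q.natDegree - 1 - i)
    omega
  rw [modByMonic_self_of_natDegree_lt hq hdeg]
  have h1 : q.natDegree - 1 = i + (q.natDegree - 1 - i) := by omega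
  rw [h1]
  have h2 : i + (q.natDegree - 1 - i) - i = q.natDegree - 1 - i := by omega
  rw [h2, coeff_X_pow_mul]

theorem cf_hb [Nontrivial R] {q : R[X]} (hq : q.Monic) {i j : ℕ}
    (hi : i < q.natDegree) (hj : j < q.natDegree) :
    cf q i (hb q j) = if i = j then 1 else 0 := by
  by_cases hij : j ≤ i
  · rw [cf_of_natDegree_le hq hi (le_trans (natDegree_hb_le q j) hij)]
    rcases eq_or_lt_of_le hij with h | h
    · rw [if_pos h.symm, ← h, coeff_hb_self q (by omega), hq.coeff_natDegree]
    · rw [if_neg (by omega), coeff_eq_zero_of_natDegree_lt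
        (lt_of_le_of_lt (natDegree_hb_le q j) h)]
  · push_neg at hij
    have hkey : X ^ (q.natDegree - 1 - i) * hb q j
        = X ^ (j - i - 1) * (X ^ (q.natDegree - j) * hb q j) := by
      rw [← mul_assoc, ← pow_add]
      congr 2
      omega
    rw [cf_apply, hkey, pow_mul_hb q (le_of_lt hj), mul_sub, sub_modByMonic,
      (modByMonic_eq_zero_iff_dvd hq).2 (dvd_mul_left _ _)]
    set w := ∑ k ∈ Finset.range (q.natDegree - j), C (q.coeff k) * X ^ k with hw
    have hwdeg : w.natDegree ≤ q.natDegree - j - 1 := by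
      apply natDegree_sum_le_of_forall_le
      intro k hk
      refine le_trans (natDegree_C_mul_X_pow_le _ _) ?_
      have := Finset.mem_range.mp hk
      omega
    have hdeg2 : (X ^ (j - i - 1) * w).natDegree ≤ q.natDegree - 2 := by
      refine le_trans natDegree_mul_le ?_
      have := natDegree_X_pow_le (R := R) (j - i - 1)
      omega
    rw [modByMonic_self_of_natDegree_lt hq (by omega), zero_sub, coeff_neg,
      coeff_eq_zero_of_natDegree_lt (by omega), neg_zero, if_neg (by omega)]

theorem cf_X_mul [Nontrivial R] {q : R[X]} (hq : q.Monic) (i : Fin q.natDegree) (s : R[X]) :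
    cf q (i : ℕ) (X * s) = ∑ k : Fin q.natDegree, companion q i k * cf q (k : ℕ) s := by
  have hn1 : 0 < q.natDegree := i.pos
  by_cases hi0 : (i : ℕ) = 0
  · have e1 : X ^ (q.natDegree - 1 - (i : ℕ)) * (X * s) = X ^ q.natDegree * s := by
      have h : q.natDegree - 1 - (i : ℕ) + 1 = q.natDegree := by omega
      rw [← mul_assoc, ← pow_succ, h]
    have e2 := pow_mul_hb q (Nat.zero_le q.natDegree)
    rw [Nat.sub_zero, hb_zero hq, mul_one] at e2
    set w := ∑ k ∈ Finset.range q.natDegree, C (q.coeff k) * X ^ k with hw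
    have e3 : X ^ q.natDegree * s = q * s - w * s := by rw [e2]; ring
    rw [cf_apply, e1, e3, sub_modByMonic,
      (modByMonic_eq_zero_iff_dvd hq).2 (dvd_mul_right _ _), zero_sub, coeff_neg]
    have e4 : w * s = ∑ k ∈ Finset.range q.natDegree, (q.coeff k) • (X ^ k * s) := by
      rw [hw, Finset.sum_mul]
      refine Finset.sum_congr rfl fun k _ => ?_
      rw [smul_eq_C_mul]; ring
    have e5 : ((w * s) %ₘ q).coeff (q.natDegree - 1)
        = ∑ k ∈ Finset.range q.natDegree, q.coeff k * ((X ^ k * s) %ₘ q).coeff (q.natDegree - 1) := by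
      rw [e4]
      rw [show ∀ p : R[X], p %ₘ q = modByMonicHom q p from fun _ => rfl]
      rw [map_sum]
      rw [finset_sum_coeff]
      refine Finset.sum_congr rfl fun k _ => ?_
      rw [LinearMap.map_smul, coeff_smul, smul_eq_mul]
      rfl
    rw [e5]
    have e6 : ∀ k ∈ Finset.range q.natDegree, q.coeff k * ((X ^ k * s) %ₘ q).coeff (q.natDegree - 1)
        = q.coeff k * cf q (q.natDegree - 1 - k) s := by
      intro k hk
      have : q.natDegree - 1 - (q.natDegree - 1 - k) = k := by have := Finset.mem_range.mp hk; omega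
      rw [cf_apply, this]
    rw [Finset.sum_congr rfl e6, ← Finset.sum_range_reflect]
    have e7 : ∀ k ∈ Finset.range q.natDegree,
        q.coeff (q.natDegree - 1 - k) * cf q (q.natDegree - 1 - (q.natDegree - 1 - k)) s
          = q.coeff (q.natDegree - 1 - k) * cf q k s := by
      intro k hk
      have : q.natDegree - 1 - (q.natDegree - 1 - k) = k := by have := Finset.mem_range.mp hk; omega
      rw [this]
    rw [Finset.sum_congr rfl e7]
    have e8 : ∀ k : Fin q.natDegree, companion q i k * cf q (k : ℕ) s
        = -(q.coeff (q.natDegree - 1 - (k : ℕ)) * cf q (k : ℕ) s) := by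
      intro k
      rw [companion, Matrix.of_apply, if_pos hi0, neg_mul]
    rw [Finset.sum_congr rfl (fun k _ => e8 k), Finset.sum_neg_distrib,
      Fin.sum_univ_eq_sum_range (fun k => q.coeff (q.natDegree - 1 - k) * cf q k s)]
  · have e1 : X ^ (q.natDegree - 1 - (i : ℕ)) * (X * s) = X ^ (q.natDegree - 1 - ((i : ℕ) - 1)) * s := by
      have h : q.natDegree - 1 - (i : ℕ) + 1 = q.natDegree - 1 - ((i : ℕ) - 1) := by omega
      rw [← mul_assoc, ← pow_succ, h]
    have hlhs : cf q (i : ℕ) (X * s) = cf q ((i : ℕ) - 1) s := by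
      rw [cf_apply, e1, ← cf_apply]
    rw [hlhs]
    rw [Finset.sum_eq_single (⟨(i : ℕ) - 1, by omega⟩ : Fin q.natDegree)]
    · rw [companion, Matrix.of_apply, if_neg hi0, if_pos (by simp; omega)]
      simp
    · intro b _ hb
      rw [companion, Matrix.of_apply, if_neg hi0, if_neg, zero_mul]
      intro hc
      apply hb
      apply Fin.ext
      simp only
      omega
    · intro hmem
      exact absurd (Finset.mem_univ _) hmem

theorem expand_hb [Nontrivial R] {q : R[X]} (hq : q.Monic) (s : R[X])
    (hs : s.degree < (q.natDegree : ℕ)) :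
    s = ∑ j ∈ Finset.range q.natDegree, C (cf q j s) * hb q j := by
  suffices H : ∀ d (s : R[X]), s.natDegree ≤ d → s.degree < (q.natDegree : ℕ) →
      s = ∑ j ∈ Finset.range q.natDegree, C (cf q j s) * hb q j from
    H s.natDegree s le_rfl hs
  intro d
  induction d with
  | zero =>
    intro s hd hdeg
    by_cases h0 : s = 0
    · subst h0
      simp
    · have hn : 0 < q.natDegree := by
        rcases Nat.eq_zero_or_pos q.natDegree with h | h
        · exfalso
          rw [h, Nat.cast_zero] at hdeg
          exact h0 (degree_eq_bot.mp (Nat.WithBot.lt_zero_iff.mp hdeg))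
        · exact h
      have hsC : s = C (s.coeff 0) := eq_C_of_natDegree_le_zero hd
      have hterm : ∀ j ∈ Finset.range q.natDegree, C (cf q j s) * hb q j
          = if j = 0 then C (s.coeff 0) * hb q 0 else 0 := by
        intro j hj
        have h1 : cf q j s = s.coeff 0 * (if j = 0 then 1 else 0) := by
          conv_lhs => rw [hsC]
          have : C (s.coeff 0) = (s.coeff 0) • hb q 0 := by
            rw [hb_zero hq, smul_eq_C_mul, mul_one]
          rw [this, LinearMap.map_smul, smul_eq_mul,
            cf_hb hq (Finset.mem_range.mp hj) hn]
        rw [h1]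
        split_ifs with h
        · rw [mul_one, h]
        · rw [mul_zero, C_0, zero_mul]
      rw [Finset.sum_congr rfl hterm, Finset.sum_ite_eq' (Finset.range q.natDegree) 0
        (fun _ => C (s.coeff 0) * hb q 0), if_pos (Finset.mem_range.mpr hn),
        hb_zero hq, mul_one, ← hsC]
  | succ d ih =>
    intro s hd hdeg
    by_cases hds : s.natDegree ≤ d
    · exact ih s hds hdeg
    push_neg at hds
    have hD : s.natDegree = d + 1 := by omega
    have hs0 : s ≠ 0 := fun h => by simp [h, natDegree_zero] at hD
    have hDn : d + 1 < q.natDegree := by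
      have h2 : (s.natDegree : WithBot ℕ) < ((q.natDegree : ℕ) : WithBot ℕ) := by
        rw [← degree_eq_natDegree hs0]; exact hdeg
      rw [hD] at h2
      exact_mod_cast h2
    set a := s.coeff (d + 1) with ha
    set s' := s - C a * hb q (d + 1) with hs'
    have hcoeff : (hb q (d + 1)).coeff (d + 1) = 1 := by
      rw [coeff_hb_self q (by omega)]; exact hq.coeff_natDegree
    have hnd' : s'.natDegree ≤ d := by
      rcases eq_or_ne s' 0 with h | h
      · simp [h]
      · have h1 : s'.natDegree ≤ d + 1 := by
          refine le_trans (natDegree_sub_le _ _) ?_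
          refine max_le (by omega) (le_trans natDegree_mul_le ?_)
          have := natDegree_hb_le q (d + 1)
          simp only [natDegree_C]
          omega
        have h2 : s'.coeff (d + 1) = 0 := by
          rw [hs', coeff_sub, coeff_C_mul, hcoeff, mul_one, ← ha, sub_self]
        have h3 : s'.natDegree ≠ d + 1 := by
          intro hc
          apply h
          apply leadingCoeff_eq_zero.mp
          rw [leadingCoeff, hc, h2]
        omega
    have hdeg' : s'.degree < ((q.natDegree : ℕ) : WithBot ℕ) := by
      calc degree s' ≤ (s'.natDegree : WithBot ℕ) := degree_le_natDegree
        _ < (q.natDegree : WithBot ℕ) := by exact_mod_cast (by omega : s'.natDegree < q.natDegree)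
    have hexp := ih s' hnd' hdeg'
    have hcf : ∀ j, cf q j s = cf q j s' + a * cf q j (hb q (d + 1)) := by
      intro j
      have hsplit : s = s' + a • hb q (d + 1) := by
        rw [hs', smul_eq_C_mul]; ring
      conv_lhs => rw [hsplit]
      rw [map_add, LinearMap.map_smul, smul_eq_mul]
    have hterm : ∀ j ∈ Finset.range q.natDegree, C (cf q j s) * hb q j
        = C (cf q j s') * hb q j + (if j = d + 1 then C a * hb q j else 0) := by
      intro j hj
      rw [hcf j, cf_hb hq (Finset.mem_range.mp hj) hDn]
      split_ifs with h
      · rw [mul_one, C_add]; ring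
      · rw [mul_zero, add_zero, add_zero]
    rw [Finset.sum_congr rfl hterm, Finset.sum_add_distrib,
      Finset.sum_ite_eq' (Finset.range q.natDegree) (d + 1) (fun j => C a * hb q j),
      if_pos (Finset.mem_range.mpr hDn), ← hexp, hs']
    ring

theorem rep_eq [Nontrivial R] {q : R[X]} (hq : q.Monic) (h : R[X]) :
    Polynomial.aeval (companion q) h
      = Matrix.of (fun i j : Fin q.natDegree => cf q (i : ℕ) (h * hb q (j : ℕ))) := by
  induction h using Polynomial.induction_on with
  | C a =>
    ext i j
    rw [aeval_C, Matrix.algebraMap_matrix_apply, Matrix.of_apply]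
    have h1 : C a * hb q (j : ℕ) = a • hb q (j : ℕ) := (smul_eq_C_mul a).symm
    rw [h1, LinearMap.map_smul, smul_eq_mul, cf_hb hq i.isLt j.isLt]
    by_cases hij : i = j
    · rw [if_pos hij, if_pos (by rw [hij]), mul_one]
      simp
    · rw [if_neg hij, if_neg (fun hc => hij (Fin.ext hc)), mul_zero]
  | add p r hp hr =>
    rw [map_add, hp, hr]
    ext i j
    simp only [Matrix.add_apply, Matrix.of_apply]
    rw [← map_add, ← add_mul]
  | monomial k a ih =>
    have hsplit : C a * X ^ (k + 1) = X * (C a * X ^ k) := by ring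
    rw [hsplit, _root_.map_mul, aeval_X, ih]
    ext i j
    rw [Matrix.mul_apply, Matrix.of_apply]
    have h2 := cf_X_mul hq i ((C a * X ^ k) * hb q (j : ℕ))
    simp only [Matrix.of_apply]
    rw [← h2]
    congr 1
    ring

theorem zmul_modByMonic [Nontrivial R] {z G : R[X]} (hz : z.Monic) (hG : G.Monic) (s : R[X]) :
    (z * s) %ₘ (z * G) = z * (s %ₘ G) := by
  conv_lhs => rw [← modByMonic_add_div s G]
  rw [mul_add, ← mul_assoc, add_modByMonic,
    (modByMonic_eq_zero_iff_dvd (hz.mul hG)).2 (dvd_mul_right _ _), add_zero]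
  apply (modByMonic_eq_self_iff (hz.mul hG)).2
  have h1 : degree (s %ₘ G) < degree G := degree_modByMonic_lt s hG
  calc degree (z * (s %ₘ G)) = degree ((s %ₘ G) * z) := by rw [mul_comm]
    _ = degree (s %ₘ G) + degree z := hz.degree_mul
    _ < degree G + degree z := by
        apply WithBot.add_lt_add_right (by rw [degree_eq_natDegree hz.ne_zero]; exact WithBot.coe_ne_bot) h1
    _ = degree (G * z) := hz.degree_mul.symm
    _ = degree (z * G) := by rw [mul_comm]


/-- The matrix whose columns are the coordinates of `z * hb G k` in the Horner basis of `g`. -/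
noncomputable def Amat (g z G : R[X]) : Matrix (Fin g.natDegree) (Fin G.natDegree) R :=
  Matrix.of fun i k => cf g (i : ℕ) (z * hb G (k : ℕ))

/-- The matrix whose columns are the coordinates of `hb g j mod G` in the Horner basis of `G`. -/
noncomputable def Pmat (g G : R[X]) : Matrix (Fin G.natDegree) (Fin g.natDegree) R :=
  Matrix.of fun k j => cf G (k : ℕ) (hb g (j : ℕ))

theorem key_factor [Nontrivial R] {g z G F f : R[X]} (hz : z.Monic) (hG : G.Monic)
    (hg : g.Monic) (hgz : g = z * G) (hfz : f = z * F) :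
    Polynomial.aeval (companion g) f
      = Amat g z G * (Polynomial.aeval (companion G) F * Pmat g G) := by
  rw [rep_eq hg f, rep_eq hG F]
  ext i j
  rw [Matrix.of_apply, Matrix.mul_apply]
  set τ := (F * hb g (j : ℕ)) %ₘ G with hτdef
  have hdiv := modByMonic_add_div (F * hb g (j : ℕ)) G
  rw [← hτdef] at hdiv
  have step1 : cf g (i : ℕ) (f * hb g (j : ℕ)) = cf g (i : ℕ) (z * τ) := by
    apply cf_eq_of_dvd_sub hg
    refine ⟨(F * hb g (j : ℕ)) /ₘ G, ?_⟩
    linear_combination hb g (j : ℕ) * hfz - z * hdiv - (F * hb g (j : ℕ) /ₘ G) * hgz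
  have hτdeg : τ.degree < ((G.natDegree : ℕ) : WithBot ℕ) := by
    have h := degree_modByMonic_lt (F * hb g (j : ℕ)) hG
    rwa [degree_eq_natDegree hG.ne_zero] at h
  have hτexp := expand_hb hG τ hτdeg
  have step2 : cf g (i : ℕ) (z * τ)
      = ∑ k ∈ Finset.range G.natDegree, cf G k τ * cf g (i : ℕ) (z * hb G k) := by
    conv_lhs => rw [hτexp]
    rw [Finset.mul_sum, map_sum]
    refine Finset.sum_congr rfl fun k _ => ?_
    have h1 : z * (C (cf G k τ) * hb G k) = (cf G k τ) • (z * hb G k) := by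
      rw [smul_eq_C_mul]; ring
    rw [h1, LinearMap.map_smul, smul_eq_mul]
  set σp := hb g (j : ℕ) %ₘ G with hσdef
  have hdiv2 := modByMonic_add_div (hb g (j : ℕ)) G
  rw [← hσdef] at hdiv2
  have hσdeg : σp.degree < ((G.natDegree : ℕ) : WithBot ℕ) := by
    have h := degree_modByMonic_lt (hb g (j : ℕ)) hG
    rwa [degree_eq_natDegree hG.ne_zero] at h
  have hσexp := expand_hb hG σp hσdeg
  have hcfσ : ∀ l : ℕ, cf G l σp = cf G l (hb g (j : ℕ)) := by
    intro l
    apply cf_eq_of_dvd_sub hG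
    refine ⟨-(hb g (j : ℕ) /ₘ G), ?_⟩
    linear_combination hdiv2
  have step3 : ∀ k : ℕ, cf G k τ
      = ∑ l ∈ Finset.range G.natDegree, cf G k (F * hb G l) * cf G l (hb g (j : ℕ)) := by
    intro k
    have e1 : cf G k τ = cf G k (F * σp) := by
      apply cf_eq_of_dvd_sub hG
      refine ⟨F * (hb g (j : ℕ) /ₘ G) - (F * hb g (j : ℕ)) /ₘ G, ?_⟩
      linear_combination hdiv - F * hdiv2
    rw [e1]
    conv_lhs => rw [hσexp]
    rw [Finset.mul_sum, map_sum]
    refine Finset.sum_congr rfl fun l _ => ?_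
    have h1 : F * (C (cf G l σp) * hb G l) = (cf G l σp) • (F * hb G l) := by
      rw [smul_eq_C_mul]; ring
    rw [h1, LinearMap.map_smul, smul_eq_mul, hcfσ l, mul_comm]
  have rhs_inner : ∀ k : Fin G.natDegree,
      (∑ l : Fin G.natDegree,
        (Matrix.of fun a b : Fin G.natDegree => cf G (a : ℕ) (F * hb G (b : ℕ))) k l
          * Pmat g G l j)
      = ∑ l ∈ Finset.range G.natDegree, cf G (k : ℕ) (F * hb G l) * cf G l (hb g (j : ℕ)) := by
    intro k
    exact Fin.sum_univ_eq_sum_range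
      (fun l => cf G (k : ℕ) (F * hb G l) * cf G l (hb g (j : ℕ))) G.natDegree
  have rhs_eq : (∑ k : Fin G.natDegree, Amat g z G i k *
      ∑ l : Fin G.natDegree,
        (Matrix.of fun a b : Fin G.natDegree => cf G (a : ℕ) (F * hb G (b : ℕ))) k l
          * Pmat g G l j)
      = ∑ k ∈ Finset.range G.natDegree, cf g (i : ℕ) (z * hb G k) *
          ∑ l ∈ Finset.range G.natDegree, cf G k (F * hb G l) * cf G l (hb g (j : ℕ)) := by
    rw [Finset.sum_congr rfl (fun k _ => by rw [rhs_inner k])]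
    exact Fin.sum_univ_eq_sum_range
      (fun k => cf g (i : ℕ) (z * hb G k) *
        ∑ l ∈ Finset.range G.natDegree, cf G k (F * hb G l) * cf G l (hb g (j : ℕ)))
      G.natDegree
  have lhs_eq : cf g (i : ℕ) (f * hb g (j : ℕ))
      = ∑ k ∈ Finset.range G.natDegree, cf g (i : ℕ) (z * hb G k) *
          ∑ l ∈ Finset.range G.natDegree, cf G k (F * hb G l) * cf G l (hb g (j : ℕ)) := by
    rw [step1, step2]
    refine Finset.sum_congr rfl fun k _ => ?_
    rw [step3 k, mul_comm]
  rw [lhs_eq, ← rhs_eq]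
  exact Finset.sum_congr rfl fun k _ => by rw [Matrix.mul_apply]

end Stmt6Aux

theorem stmt6 {R : Type*} [CommRing R] [IsDomain R] (hR : IsEDD R)
    (g f z G F : R[X]) (hg : g.Monic) (hz : z.Monic) (hG : G.Monic)
    (hzf : z ∣ f) (hzg : z ∣ g)
    (hgcd : ∀ w : R[X], w ∣ f → w ∣ g → w ∣ z)
    (hgz : g = z * G) (hfz : f = z * F) :
    (∀ ρ σ : Fin (G.natDegree + 1) → Fin g.natDegree,
      Function.Injective ρ → Function.Injective σ →
      ((Polynomial.aeval (companion g) f).submatrix ρ σ).det = 0) ∧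
    (∀ ρ σ : Fin G.natDegree → Fin g.natDegree,
      Function.Injective ρ → Function.Injective σ →
      (Polynomial.aeval (companion G) F).det ∣
        ((Polynomial.aeval (companion g) f).submatrix ρ σ).det) ∧
    (∀ d : R,
      (∀ ρ σ : Fin G.natDegree → Fin g.natDegree,
        Function.Injective ρ → Function.Injective σ →
        d ∣ ((Polynomial.aeval (companion g) f).submatrix ρ σ).det) →
      d ∣ (Polynomial.aeval (companion G) F).det) := by
  classical
  open Stmt6Aux in
  have hnm : g.natDegree = z.natDegree + G.natDegree := by
    rw [hgz, natDegree_mul hz.ne_zero hG.ne_zero]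
  have key := Stmt6Aux.key_factor (F := F) (f := f) hz hG hg hgz hfz
  -- the square-case decomposition of minors
  have decomp : ∀ ρ σ : Fin G.natDegree → Fin g.natDegree,
      ((Polynomial.aeval (companion g) f).submatrix ρ σ).det
        = ((Stmt6Aux.Amat g z G).submatrix ρ id).det *
            ((Polynomial.aeval (companion G) F).det *
              ((Stmt6Aux.Pmat g G).submatrix id σ).det) := by
    intro ρ σ
    have e1 : (Polynomial.aeval (companion g) f).submatrix ρ σ
        = ((Stmt6Aux.Amat g z G).submatrix ρ id) *
            ((Polynomial.aeval (companion G) F) * ((Stmt6Aux.Pmat g G).submatrix id σ)) := by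
      rw [key]
      ext i j
      simp only [Matrix.submatrix_apply, Matrix.mul_apply, id_eq]
    rw [e1, Matrix.det_mul, Matrix.det_mul]
  refine ⟨?_, ?_, ?_⟩
  · -- all (r+1) × (r+1) minors vanish
    intro ρ σ hρ hσ
    set A' : Matrix (Fin (G.natDegree + 1)) (Fin (G.natDegree + 1)) R :=
      Matrix.of fun i k => if h : (k : ℕ) < G.natDegree
        then Stmt6Aux.Amat g z G (ρ i) ⟨(k : ℕ), h⟩ else 0 with hA'
    set B' : Matrix (Fin (G.natDegree + 1)) (Fin (G.natDegree + 1)) R :=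
      Matrix.of fun k j => if h : (k : ℕ) < G.natDegree
        then ((Polynomial.aeval (companion G) F) * Stmt6Aux.Pmat g G) ⟨(k : ℕ), h⟩ (σ j)
        else 0 with hB'
    have e : (Polynomial.aeval (companion g) f).submatrix ρ σ = A' * B' := by
      rw [key]
      ext i j
      rw [Matrix.submatrix_apply, Matrix.mul_apply, Matrix.mul_apply,
        Fin.sum_univ_castSucc]
      have hlast : A' i (Fin.last G.natDegree) * B' (Fin.last G.natDegree) j = 0 := by
        rw [hA']
        simp
      rw [hlast, add_zero]
      refine Finset.sum_congr rfl fun k _ => ?_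
      rw [hA', hB']
      simp only [Matrix.of_apply, Fin.coe_castSucc, Fin.is_lt, dif_pos, Fin.eta]
    rw [e, Matrix.det_mul,
      Matrix.det_eq_zero_of_column_eq_zero (Fin.last G.natDegree)
        (fun i => by rw [hA']; simp), zero_mul]
  · -- det F(C_G) divides all r × r minors
    intro ρ σ hρ hσ
    rw [decomp ρ σ]
    exact ⟨((Stmt6Aux.Amat g z G).submatrix ρ id).det *
      ((Stmt6Aux.Pmat g G).submatrix id σ).det, by ring⟩
  · -- any common divisor of the r × r minors divides det F(C_G)
    intro d hd
    set ρ₀ : Fin G.natDegree → Fin g.natDegree :=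
      fun i => ⟨z.natDegree + (i : ℕ), by omega⟩ with hρ₀def
    set σ₀ : Fin G.natDegree → Fin g.natDegree :=
      fun j => ⟨(j : ℕ), by omega⟩ with hσ₀def
    have hρ₀ : Function.Injective ρ₀ := by
      intro a b hab
      have := congrArg Fin.val hab
      simp only [hρ₀def] at this
      exact Fin.ext (by omega)
    have hσ₀ : Function.Injective σ₀ := by
      intro a b hab
      have := congrArg Fin.val hab
      simp only [hσ₀def] at this
      exact Fin.ext (by omega)
    have hAentry : ∀ i k : Fin G.natDegree, (k : ℕ) ≤ (i : ℕ) →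
        Stmt6Aux.Amat g z G (ρ₀ i) k = if (i : ℕ) = (k : ℕ) then 1 else 0 := by
      intro i k hk
      show Stmt6Aux.cf g ((ρ₀ i : Fin g.natDegree) : ℕ) (z * Stmt6Aux.hb G (k : ℕ)) = _
      have hρval : ((ρ₀ i : Fin g.natDegree) : ℕ) = z.natDegree + (i : ℕ) := rfl
      rw [hρval]
      have hdegzh : (z * Stmt6Aux.hb G (k : ℕ)).natDegree ≤ z.natDegree + (k : ℕ) := by
        refine le_trans natDegree_mul_le ?_
        have := Stmt6Aux.natDegree_hb_le G (k : ℕ)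
        omega
      rw [Stmt6Aux.cf_of_natDegree_le hg (by omega) (le_trans hdegzh (by omega))]
      by_cases h : (i : ℕ) = (k : ℕ)
      · rw [if_pos h]
        have h1 : (Stmt6Aux.hb G (k : ℕ)).coeff (k : ℕ) = 1 := by
          rw [Stmt6Aux.coeff_hb_self G (by omega), hG.coeff_natDegree]
        have h2 : (Stmt6Aux.hb G (k : ℕ)).natDegree = (k : ℕ) :=
          le_antisymm (Stmt6Aux.natDegree_hb_le _ _)
            (le_natDegree_of_ne_zero (by rw [h1]; exact one_ne_zero))
        have h3 : z.natDegree + (i : ℕ) = z.natDegree + (Stmt6Aux.hb G (k : ℕ)).natDegree := by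
          rw [h2, h]
        rw [h3, coeff_mul_degree_add_degree, hz.leadingCoeff, one_mul, leadingCoeff, h2, h1]
      · rw [if_neg h]
        exact coeff_eq_zero_of_natDegree_lt (lt_of_le_of_lt hdegzh (by omega))
    have hPentry : ∀ k j : Fin G.natDegree, (j : ℕ) ≤ (k : ℕ) →
        Stmt6Aux.Pmat g G k (σ₀ j) = if (k : ℕ) = (j : ℕ) then 1 else 0 := by
      intro k j hj
      show Stmt6Aux.cf G (k : ℕ) (Stmt6Aux.hb g ((σ₀ j : Fin g.natDegree) : ℕ)) = _
      have hσval : ((σ₀ j : Fin g.natDegree) : ℕ) = (j : ℕ) := rfl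
      rw [hσval]
      rw [Stmt6Aux.cf_of_natDegree_le hG k.isLt (le_trans (Stmt6Aux.natDegree_hb_le g (j : ℕ)) hj)]
      by_cases h : (k : ℕ) = (j : ℕ)
      · rw [if_pos h, h, Stmt6Aux.coeff_hb_self g (by omega), hg.coeff_natDegree]
      · rw [if_neg h]
        exact coeff_eq_zero_of_natDegree_lt
          (lt_of_le_of_lt (Stmt6Aux.natDegree_hb_le g (j : ℕ)) (by omega))
    have detA : ((Stmt6Aux.Amat g z G).submatrix ρ₀ id).det = 1 := by
      rw [Matrix.det_of_upperTriangular]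
      · refine Finset.prod_eq_one fun i _ => ?_
        rw [Matrix.submatrix_apply, id_eq, hAentry i i le_rfl, if_pos rfl]
      · intro i k hki
        have hki' : (k : ℕ) < (i : ℕ) := hki
        rw [Matrix.submatrix_apply, id_eq, hAentry i k (le_of_lt hki'), if_neg (by omega)]
    have detP : ((Stmt6Aux.Pmat g G).submatrix id σ₀).det = 1 := by
      rw [Matrix.det_of_upperTriangular]
      · refine Finset.prod_eq_one fun k _ => ?_
        rw [Matrix.submatrix_apply, id_eq, hPentry k k le_rfl, if_pos rfl]
      · intro k j hjk
        have hjk' : (j : ℕ) < (k : ℕ) := hjk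
        rw [Matrix.submatrix_apply, id_eq, hPentry k j (le_of_lt hjk'), if_neg (by omega)]
    have h := hd ρ₀ σ₀ hρ₀ hσ₀
    rw [decomp ρ₀ σ₀, detA, detP, one_mul, mul_one] at h
    exact h
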